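/- For any u ≥ 0, the pure strategy profile (⊥,⊥,⊥) in the game H1(u) is a strong Nash equilibrium: for every mixed strategy profile x' ≠ (⊥,⊥,⊥) there is a player i with x'_i ≠ ⊥ whose payoff under x' is at most their payoff at (⊥,⊥,⊥). -/

import Mathlib

open Set

/-- Expected payoff in a 3-player game where each player has two actions
(`true` = G, `false` = ⊥), given the probabilities `p q r` of playing G. -/
noncomputable def exp3 (f : Bool → Bool → Bool → ℝ) (p q r : ℝ) : ℝ :=
  p*q*r * f true true true + p*q*(1-r) * f true true false +
  p*(1-q)*r * f true false true + p*(1-q)*(1-r) * f true false false +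
  (1-p)*q*r * f false true true + (1-p)*q*(1-r) * f false true false +
  (1-p)*(1-q)*r * f false false true + (1-p)*(1-q)*(1-r) * f false false false

/-- Payoff to player `i` in the game H1(u); `true` = G, `false` = ⊥. -/
noncomputable def H1 (u : ℝ) (i : Fin 3) (a b c : Bool) : ℝ :=
  match a, b, c with
  | true,  true,  true  => ![2*u, -u, -u] i
  | true,  true,  false => ![1, -1, 0] i
  | true,  false, true  => ![1, 0, -1] i
  | true,  false, false => ![-4, 2, 2] i
  | false, true,  true  => ![0, 0, 0] i
  | false, true,  false => ![2, -3, 1] i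
  | false, false, true  => ![2, 1, -3] i
  | false, false, false => ![-2, 1, 1] i

/-- `(p,q,r)` is a (mixed) Nash equilibrium of H1(u). -/
def H1NE (u p q r : ℝ) : Prop :=
  p ∈ Icc (0:ℝ) 1 ∧ q ∈ Icc (0:ℝ) 1 ∧ r ∈ Icc (0:ℝ) 1 ∧
  (∀ p' ∈ Icc (0:ℝ) 1, exp3 (H1 u 0) p' q r ≤ exp3 (H1 u 0) p q r) ∧
  (∀ q' ∈ Icc (0:ℝ) 1, exp3 (H1 u 1) p q' r ≤ exp3 (H1 u 1) p q r) ∧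
  (∀ r' ∈ Icc (0:ℝ) 1, exp3 (H1 u 2) p q r' ≤ exp3 (H1 u 2) p q r)

/-- For u ≥ 0, the profile (⊥,⊥,⊥) is a strong Nash equilibrium of H1(u):
for every mixed profile (p,q,r) ≠ (0,0,0) some player i with x'_i ≠ ⊥ gets
payoff at most their payoff at (⊥,⊥,⊥). -/
theorem stmt2 (u : ℝ) (hu : 0 ≤ u) (p q r : ℝ)
    (hp : p ∈ Icc (0:ℝ) 1) (hq : q ∈ Icc (0:ℝ) 1) (hr : r ∈ Icc (0:ℝ) 1)
    (hne : ¬ (p = 0 ∧ q = 0 ∧ r = 0)) :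
    (p ≠ 0 ∧ exp3 (H1 u 0) p q r ≤ exp3 (H1 u 0) 0 0 0) ∨
    (q ≠ 0 ∧ exp3 (H1 u 1) p q r ≤ exp3 (H1 u 1) 0 0 0) ∨
    (r ≠ 0 ∧ exp3 (H1 u 2) p q r ≤ exp3 (H1 u 2) 0 0 0) := by
  
  have e0 : exp3 (H1 u 0) p q r =
      -2 + 4*r + 4*q - 6*q*r - 2*p + p*r + p*q + 2*p*q*r*u := by
    simp only [exp3, H1]; norm_num [Matrix.cons_val_zero]; ring
  have e1 : exp3 (H1 u 1) p q r =
      1 - 4*q + 3*q*r + p - 2*p*r + p*q - p*q*r*u := by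
    simp only [exp3, H1]; norm_num [Matrix.cons_val_one]; ring
  have e2 : exp3 (H1 u 2) p q r =
      1 - 4*r + 3*q*r + p + p*r - 2*p*q - p*q*r*u := by
    simp only [exp3, H1]; norm_num [Matrix.cons_val_two]; ring
  have b0 : exp3 (H1 u 0) 0 0 0 = -2 := by simp [exp3, H1]
  have b1 : exp3 (H1 u 1) 0 0 0 = 1 := by simp [exp3, H1]
  have b2 : exp3 (H1 u 2) 0 0 0 = 1 := by simp [exp3, H1]
  obtain ⟨hp0, hp1⟩ := hp
  obtain ⟨hq0, hq1⟩ := hq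
  obtain ⟨hr0, hr1⟩ := hr
  rw [e0, e1, e2, b0, b1, b2]
  rcases eq_or_ne q 0 with hq | hq
  · rcases eq_or_ne r 0 with hr | hr
    · -- q = 0, r = 0, so p ≠ 0
      have hp : p ≠ 0 := fun h => hne ⟨h, hq, hr⟩
      left
      refine ⟨hp, ?_⟩
      subst hq hr
      nlinarith
    · -- q = 0, r ≠ 0
      subst hq
      by_cases h2 : 1 - 4*r + 3*0*r + p + p*r - 2*p*0 - p*0*r*u ≤ 1
      · right; right; exact ⟨hr, h2⟩
      · push_neg at h2
        left
        constructor
        · intro h; subst h; nlinarith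
        · nlinarith [mul_nonneg hp0 hr0, mul_nonneg (mul_nonneg hp0 hr0) hu]
  · -- q ≠ 0
    by_cases h1 : 1 - 4*q + 3*q*r + p - 2*p*r + p*q - p*q*r*u ≤ 1
    · right; left; exact ⟨hq, h1⟩
    · push_neg at h1
      have hqpos : 0 < q := lt_of_le_of_ne hq0 (Ne.symm hq)
      have hppos : 0 < p := by
        by_contra h
        push_neg at h
        have hp' : p = 0 := le_antisymm h hp0
        subst hp'
        nlinarith
      rcases eq_or_ne r 0 with hr | hr
      · -- r = 0
        subst hr
        left
        refine ⟨ne_of_gt hppos, ?_⟩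
        nlinarith [mul_nonneg hq0 (sub_nonneg.2 hp1), mul_pos hppos hqpos]
      · by_cases h2 : 1 - 4*r + 3*q*r + p + p*r - 2*p*q - p*q*r*u ≤ 1
        · right; right; exact ⟨hr, h2⟩
        · push_neg at h2
          left
          refine ⟨ne_of_gt hppos, ?_⟩
          nlinarith
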